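/- If f(x), g(x) ∈ ℚ[x] are two Hilbert polynomials, then their product f(x)·g(x) is a Hilbert polynomial. -/

import Mathlib

open Polynomial

/-- A polynomial `f ∈ ℚ[x]` is a *Hilbert polynomial* if there exist a field `k`,
a standard graded `k`-algebra `R` (a commutative `ℕ`-graded `k`-algebra with
finite-dimensional graded pieces, generated as a `k`-algebra by its degree-one part)
and an `N₀` such that `dim_k R_i = f(i)` for all `i ≥ N₀`. -/
def IsHilbertPolynomial (f : Polynomial ℚ) : Prop :=
  ∃ (k : Type) (R : Type) (_ : Field k) (_ : CommRing R) (_ : Algebra k R)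
    (𝒜 : ℕ → Submodule k R) (_ : GradedAlgebra 𝒜),
    (∀ i : ℕ, FiniteDimensional k (𝒜 i)) ∧
    Algebra.adjoin k ((𝒜 1 : Submodule k R) : Set R) = ⊤ ∧
    ∃ N₀ : ℕ, ∀ i : ℕ, N₀ ≤ i → (Module.finrank k (𝒜 i) : ℚ) = f.eval (i : ℚ)

open Submodule Set Polynomial DirectSum


section Greedy

variable {K V ι : Type*} [Field K] [AddCommGroup V] [Module K V] [LinearOrder ι]

/-- Greedy extraction of a basis from a finite spanning family. -/
theorem greedy_finrank (s : Set ι) (hs : s.Finite) (v : ι → V) :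
    Module.finrank K (span K (v '' s)) =
      {i | i ∈ s ∧ v i ∉ span K (v '' {j | j ∈ s ∧ j < i})}.ncard := by
  classical
  set good : ι → Prop := fun i => v i ∉ span K (v '' {j | j ∈ s ∧ j < i}) with hgood
  set t : Set ι := {i | i ∈ s ∧ good i} with ht
  have hts : t ⊆ s := fun i hi => hi.1
  have htf : t.Finite := hs.subset hts
  -- spanning
  have hspan : span K (v '' t) = span K (v '' s) := by
    refine le_antisymm (span_mono (image_mono hts)) ?_
    rw [span_le]
    rintro - ⟨i, hi, rfl⟩
    by_contra hbad
    -- minimal counterexample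
    set bad : Set ι := {i | i ∈ s ∧ v i ∉ span K (v '' t)} with hbadset
    have hbf : bad.Finite := hs.subset fun i hi => hi.1
    have hbne : bad.Nonempty := ⟨i, hi, hbad⟩
    obtain ⟨m, hm, hmin⟩ := Set.exists_min_image bad id hbf hbne
    have hmgood : ¬ good m := by
      intro hg
      exact hm.2 (subset_span ⟨m, ⟨hm.1, hg⟩, rfl⟩)
    rw [hgood, not_not] at hmgood
    have hle : span K (v '' {j | j ∈ s ∧ j < m}) ≤ span K (v '' t) := by
      rw [span_le]
      rintro - ⟨j, hj, rfl⟩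
      by_cases hjb : v j ∈ span K (v '' t)
      · exact hjb
      · exact absurd (hmin j ⟨hj.1, hjb⟩) (not_le_of_gt hj.2)
    exact hm.2 (hle hmgood)
  -- injectivity on t
  have hinj : Set.InjOn v t := by
    intro a ha b hb hab
    by_contra hne
    rcases lt_or_gt_of_ne hne with h | h
    · exact hb.2 (hab ▸ subset_span ⟨a, ⟨ha.1, h⟩, rfl⟩)
    · exact ha.2 (hab.symm ▸ subset_span ⟨b, ⟨hb.1, h⟩, rfl⟩)
  -- linear independence of the family on t
  have hli : LinearIndependent K (v ∘ ((↑) : t → ι)) := by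
    rw [linearIndependent_comp_subtype_iff, linearIndepOn_iff]
    intro l hl hl0
    by_contra hlne
    have hsupp : l.support.Nonempty := Finsupp.support_nonempty_iff.mpr hlne
    set i := l.support.max' hsupp with hi
    have hit : i ∈ t := hl (l.support.max'_mem hsupp)
    have hsum : (l.support.sum fun j => l j • v j) = 0 := by
      rw [Finsupp.linearCombination_apply, Finsupp.sum] at hl0
      exact hl0
    have hsplit : l i • v i = - ∑ j ∈ l.support.erase i, l j • v j := by
      rw [eq_neg_iff_add_eq_zero, ← Finset.add_sum_erase _ _ (l.support.max'_mem hsupp)] at *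
      exact hsum
    have hmem : v i ∈ span K (v '' {j | j ∈ s ∧ j < i}) := by
      have h1 : l i • v i ∈ span K (v '' {j | j ∈ s ∧ j < i}) := by
        rw [hsplit]
        refine neg_mem (Submodule.sum_mem _ fun j hj => ?_)
        have hjs : j ∈ l.support := Finset.mem_of_mem_erase hj
        have hjt : j ∈ t := hl hjs
        have hjlt : j < i := lt_of_le_of_ne (l.support.le_max' j hjs) (Finset.ne_of_mem_erase hj)
        exact smul_mem _ _ (subset_span ⟨j, ⟨hjt.1, hjlt⟩, rfl⟩)
      have hne : l i ≠ 0 := Finsupp.mem_support_iff.mp (l.support.max'_mem hsupp)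
      have := smul_mem (span K (v '' {j | j ∈ s ∧ j < i})) (l i)⁻¹ h1
      rwa [inv_smul_smul₀ hne] at this
    exact hit.2 hmem
  -- conclude
  have hli' : LinearIndependent K (fun x : ↥(v '' t) => (x : V)) :=
    (linearIndepOn_iff_image hinj).mp hli
  haveI : Fintype ↥(v '' t) := (htf.image v).fintype
  rw [← hspan, finrank_span_set_eq_card hli', ← Set.ncard_eq_toFinset_card',
    Set.ncard_image_of_injOn hinj]

end Greedy


namespace SegreConstr
noncomputable section

set_option maxHeartbeats 1000000
set_option synthInstance.maxHeartbeats 400000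

variable {M : Type} [AddCommMonoid M]

abbrev AA (M : Type) [AddCommMonoid M] := AddMonoidAlgebra ℚ M

/-- basic monomial -/
abbrev sg (m : M) : AA M := AddMonoidAlgebra.single m (1 : ℚ)

lemma sg_smul (m : M) (r : ℚ) : (AddMonoidAlgebra.single m r : AA M) = r • sg m := by
  rw [AddMonoidAlgebra.smul_single', mul_one]

lemma sg_mul (a b : M) : sg a * sg b = sg (a + b) :=
  (AddMonoidAlgebra.single_mul_single _ _ _ _).trans (congrArg _ (mul_one 1))

lemma span_sg_top : ∀ y : AA M, y ∈ span ℚ (Set.range (sg : M → AA M)) := by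
  intro y
  induction y using AddMonoidAlgebra.induction_linear with
  | zero => exact zero_mem _
  | add f g hf hg => exact add_mem hf hg
  | single m r =>
    have : (AddMonoidAlgebra.single m r : AA M) = r • sg m := sg_smul m r
    rw [this]
    exact smul_mem _ _ (subset_span ⟨m, rfl⟩)

variable (V : Set M)

/-- The monomial ideal spanned by monomials outside `V`. -/
def idl (hA : ∀ a b : M, a + b ∈ V → a ∈ V ∧ b ∈ V) : Ideal (AA M) where
  carrier := (span ℚ (sg '' Vᶜ) : Submodule ℚ (AA M))
  add_mem' {a b} ha hb := add_mem ha hb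
  zero_mem' := zero_mem _
  smul_mem' := by
    intro c x hx
    simp only [SetLike.mem_coe] at hx ⊢
    rw [smul_eq_mul]
    induction hx using Submodule.span_induction with
    | mem y hy =>
      obtain ⟨m, hm, rfl⟩ := hy
      induction c using AddMonoidAlgebra.induction_linear with
      | zero => rw [zero_mul]; exact zero_mem _
      | add f g hf hg => rw [add_mul]; exact add_mem hf hg
      | single m' r =>
        have h1 : (AddMonoidAlgebra.single m' r : AA M) * sg m
            = AddMonoidAlgebra.single (m' + m) (r : ℚ) :=
          (AddMonoidAlgebra.single_mul_single _ _ _ _).trans (congrArg _ (mul_one r))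
        have hm' : m' + m ∈ Vᶜ := fun hmem => hm ((hA m' m hmem).2)
        rw [h1, sg_smul]
        exact smul_mem _ _ (subset_span ⟨m' + m, hm', rfl⟩)
    | zero => rw [mul_zero]; exact zero_mem _
    | add y z _ _ hy hz => rw [mul_add]; exact add_mem hy hz
    | smul r y _ hy => rw [mul_smul_comm]; exact smul_mem _ _ hy

lemma support_subset_of_mem_idl (hA : ∀ a b : M, a + b ∈ V → a ∈ V ∧ b ∈ V)
    {x : AA M} (hx : x ∈ idl V hA) : ∀ m ∈ x.coeff.support, m ∈ Vᶜ := by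
  classical
  have hx' : x ∈ span ℚ (sg '' Vᶜ) := hx
  clear hx
  induction hx' using Submodule.span_induction with
  | mem y hy =>
    obtain ⟨m, hm, rfl⟩ := hy
    intro m' hm'
    have := Finsupp.support_single_subset hm'
    rw [Finset.mem_singleton] at this
    rwa [this]
  | zero => intro m hm; simp at hm
  | add y z _ _ hy hz =>
    intro m hm
    rcases Finset.mem_union.mp (Finsupp.support_add hm) with h | h
    · exact hy m h
    · exact hz m h
  | smul r y _ hy =>
    intro m hm
    exact hy m (Finsupp.support_smul hm)

variable (hA : ∀ a b : M, a + b ∈ V → a ∈ V ∧ b ∈ V)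

abbrev W := AA M ⧸ idl V hA

def mkW : AA M →ₐ[ℚ] W V hA := Ideal.Quotient.mkₐ ℚ (idl V hA)

def bb (m : M) : W V hA := mkW V hA (sg m)

lemma bb_mul (a b : M) : bb V hA a * bb V hA b = bb V hA (a + b) := by
  rw [bb, bb, bb, ← map_mul, sg_mul]

lemma bb_zero : bb V hA 0 = 1 := by
  rw [bb]
  show mkW V hA (sg 0) = 1
  rw [show (sg 0 : AA M) = 1 from AddMonoidAlgebra.one_def.symm, map_one]

lemma bb_eq_zero {m : M} (hm : m ∉ V) : bb V hA m = 0 := by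
  rw [bb, mkW, Ideal.Quotient.mkₐ_eq_mk, Ideal.Quotient.eq_zero_iff_mem]
  exact subset_span ⟨m, hm, rfl⟩

lemma mkW_single (m : M) (r : ℚ) :
    mkW V hA (AddMonoidAlgebra.single m r) = r • bb V hA m := by
  rw [bb, ← map_smul, ← sg_smul]

lemma bb_li : LinearIndependent ℚ (fun v : V => bb V hA ↑v) := by
  classical
  rw [linearIndependent_iff]
  intro l hl
  have h1 : Finsupp.linearCombination ℚ (fun v : V => bb V hA ↑v) l
      = mkW V hA (AddMonoidAlgebra.ofCoeff (Finsupp.mapDomain Subtype.val l)) := by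
    rw [Finsupp.linearCombination_apply, Finsupp.mapDomain, AddMonoidAlgebra.ofCoeff_finsuppSum,
      map_finsuppSum]
    refine Finsupp.sum_congr fun v _ => ?_
    rw [← mkW_single]; rfl
  rw [h1] at hl
  have h2 : AddMonoidAlgebra.ofCoeff (Finsupp.mapDomain Subtype.val l) ∈ idl V hA := by
    rwa [mkW, Ideal.Quotient.mkₐ_eq_mk, Ideal.Quotient.eq_zero_iff_mem] at hl
  have h3 : (Finsupp.mapDomain Subtype.val l).support ⊆ ∅ := by
    intro m hm
    have hmc : m ∈ Vᶜ := support_subset_of_mem_idl V hA h2 m hm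
    have hmv : m ∈ V := by
      have := Finsupp.mapDomain_support hm
      simp only [Finset.mem_image] at this
      obtain ⟨v, _, rfl⟩ := this
      exact v.2
    exact absurd hmv hmc
  have h4 : Finsupp.mapDomain Subtype.val l = 0 :=
    Finsupp.support_eq_empty.mp (Finset.subset_empty.mp h3)
  apply Finsupp.mapDomain_injective (Subtype.val_injective (p := (· ∈ V)))
  rw [h4, Finsupp.mapDomain_zero]

lemma bb_span : ⊤ ≤ span ℚ (Set.range fun v : V => bb V hA ↑v) := by
  intro w _
  obtain ⟨y, rfl⟩ := Ideal.Quotient.mkₐ_surjective ℚ (idl V hA) w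
  have hy : y ∈ span ℚ (Set.range (sg : M → AA M)) := span_sg_top y
  have h2 : (Ideal.Quotient.mkₐ ℚ (idl V hA)) y ∈
      Submodule.map (Ideal.Quotient.mkₐ ℚ (idl V hA)).toLinearMap
        (span ℚ (Set.range (sg : M → AA M))) := ⟨y, hy, rfl⟩
  rw [Submodule.map_span] at h2
  refine span_le.mpr ?_ h2
  rintro - ⟨-, ⟨m, rfl⟩, rfl⟩
  simp only [AlgHom.toLinearMap_apply]
  by_cases hm : m ∈ V
  · exact subset_span ⟨⟨m, hm⟩, rfl⟩
  · show bb V hA m ∈ _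
    rw [bb_eq_zero V hA hm]
    exact zero_mem _

def basisW : Module.Basis V ℚ (W V hA) := Module.Basis.mk (bb_li V hA) (bb_span V hA)

lemma basisW_apply (v : V) : basisW V hA v = bb V hA ↑v := Module.Basis.mk_apply _ _ _

variable (deg : M →+ ℕ)

def grW (d : ℕ) : Submodule ℚ (W V hA) := span ℚ (bb V hA '' {v | v ∈ V ∧ deg v = d})

lemma bb_mem_grW {v : M} (hv : v ∈ V) : bb V hA v ∈ grW V hA deg (deg v) :=
  subset_span ⟨v, ⟨hv, rfl⟩, rfl⟩

lemma grW_one_mem : (1 : W V hA) ∈ grW V hA deg 0 := by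
  by_cases h0 : (0 : M) ∈ V
  · rw [← bb_zero V hA]
    have := bb_mem_grW V hA deg h0
    rwa [map_zero] at this
  · rw [← bb_zero V hA, bb_eq_zero V hA h0]
    exact zero_mem _

lemma grW_mul_mem {i j : ℕ} {a b : W V hA} (ha : a ∈ grW V hA deg i)
    (hb : b ∈ grW V hA deg j) : a * b ∈ grW V hA deg (i + j) := by
  have h1 : grW V hA deg i * grW V hA deg j ≤ grW V hA deg (i + j) := by
    rw [grW, grW, span_mul_span]
    refine span_le.mpr ?_
    rintro x hx
    rw [Set.mem_mul] at hx
    obtain ⟨x1, hx1, x2, hx2, rfl⟩ := hx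
    obtain ⟨v, ⟨hv, hdv⟩, rfl⟩ := hx1
    obtain ⟨u, ⟨hu, hdu⟩, rfl⟩ := hx2
    rw [bb_mul]
    by_cases hvu : v + u ∈ V
    · exact subset_span ⟨v + u, ⟨hvu, by rw [map_add, hdv, hdu]⟩, rfl⟩
    · rw [bb_eq_zero V hA hvu]; exact zero_mem _
  exact h1 (mul_mem_mul ha hb)

def gradedMonoidW : SetLike.GradedMonoid (grW V hA deg) where
  one_mem := grW_one_mem V hA deg
  mul_mem := fun {i j gi gj} hgi hgj => grW_mul_mem V hA deg hgi hgj

def DecW : W V hA →ₗ[ℚ] ⨁ d : ℕ, grW V hA deg d :=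
  (basisW V hA).constr ℚ fun v =>
    DirectSum.lof ℚ ℕ (fun d => grW V hA deg d) (deg ↑v) ⟨bb V hA ↑v, bb_mem_grW V hA deg v.2⟩

lemma DecW_bb (v : V) : DecW V hA deg (bb V hA ↑v) =
    DirectSum.lof ℚ ℕ (fun d => grW V hA deg d) (deg ↑v)
      ⟨bb V hA ↑v, bb_mem_grW V hA deg v.2⟩ := by
  have h := (basisW V hA).constr_basis ℚ (fun v : V =>
    DirectSum.lof ℚ ℕ (fun d => grW V hA deg d) (deg ↑v)
      ⟨bb V hA ↑v, bb_mem_grW V hA deg v.2⟩) v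
  rw [basisW_apply] at h
  exact h

lemma DecW_left : DirectSum.coeLinearMap (grW V hA deg) ∘ₗ DecW V hA deg = .id := by
  refine (basisW V hA).ext fun v => ?_
  rw [LinearMap.comp_apply, basisW_apply, DecW_bb, DirectSum.lof_eq_of,
    DirectSum.coeLinearMap_of, LinearMap.id_apply]

lemma DecW_of {d : ℕ} (w : W V hA) (hw : w ∈ grW V hA deg d) :
    DecW V hA deg w = DirectSum.lof ℚ ℕ (fun d => grW V hA deg d) d ⟨w, hw⟩ := by
  induction hw using Submodule.span_induction with
  | mem x hx =>
    obtain ⟨v, ⟨hv, hdv⟩, rfl⟩ := hx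
    subst hdv
    exact DecW_bb V hA deg ⟨v, hv⟩
  | zero =>
    have h0 : (⟨0, zero_mem _⟩ : grW V hA deg d) = 0 := rfl
    rw [map_zero, h0, map_zero]
  | add x y hx hy ihx ihy =>
    have h0 : (⟨x + y, add_mem hx hy⟩ : grW V hA deg d) = ⟨x, hx⟩ + ⟨y, hy⟩ := rfl
    rw [map_add, ihx, ihy, h0, map_add]
  | smul r x hx ih =>
    have h0 : (⟨r • x, smul_mem _ r hx⟩ : grW V hA deg d) = r • (⟨x, hx⟩ : grW V hA deg d) := rfl
    rw [map_smul, ih, h0, map_smul]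

lemma DecW_right : DecW V hA deg ∘ₗ DirectSum.coeLinearMap (grW V hA deg) = .id := by
  refine DirectSum.linearMap_ext _ fun d => ?_
  ext x : 1
  rw [LinearMap.comp_apply, LinearMap.comp_apply, LinearMap.comp_apply,
    DirectSum.lof_eq_of, DirectSum.coeLinearMap_of, LinearMap.id_apply]
  exact DecW_of V hA deg (x : W V hA) x.2

def decompositionW : DirectSum.Decomposition (grW V hA deg) :=
  DirectSum.Decomposition.ofLinearMap _ (DecW V hA deg) (DecW_left V hA deg)
    (DecW_right V hA deg)

section Assemble


lemma fd_grW (d : ℕ) (hD : {v | v ∈ V ∧ deg v = d}.Finite) :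
    FiniteDimensional ℚ (grW V hA deg d) := by
  rw [grW]
  exact FiniteDimensional.span_of_finite ℚ (hD.image _)

lemma finrank_grW (d : ℕ) (hD : {v | v ∈ V ∧ deg v = d}.Finite) :
    Module.finrank ℚ (grW V hA deg d) = {v | v ∈ V ∧ deg v = d}.ncard := by
  classical
  set s : Set M := {v | v ∈ V ∧ deg v = d} with hs
  have hsub : s ⊆ V := fun v hv => hv.1
  have hinjV : Set.InjOn (bb V hA) V := by
    intro a ha b hb hab
    have h2 : basisW V hA ⟨a, ha⟩ = basisW V hA ⟨b, hb⟩ := by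
      rw [basisW_apply, basisW_apply]; exact hab
    have := (basisW V hA).injective h2
    exact congrArg Subtype.val this
  have hinj : Set.InjOn (bb V hA) s := hinjV.mono hsub
  have hmap : LinearIndependent ℚ (fun v : s => bb V hA ↑v) :=
    (bb_li V hA).comp (Set.inclusion hsub) (Set.inclusion_injective hsub)
  have hli : LinearIndependent ℚ (fun x : ↥(bb V hA '' s) => (x : W V hA)) :=
    (linearIndepOn_iff_image hinj).mp hmap
  haveI : Fintype ↥(bb V hA '' s) := (hD.image _).fintype
  rw [grW, finrank_span_set_eq_card hli, ← Set.ncard_eq_toFinset_card',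
    Set.ncard_image_of_injOn hinj]

lemma adjoin_grW (hB : ∀ v ∈ V, deg v = 0 → v = 0)
    (hC : ∀ v ∈ V, 0 < deg v → ∃ a b : M, v = a + b ∧ deg a = 1) :
    Algebra.adjoin ℚ ((grW V hA deg 1 : Submodule ℚ (W V hA)) : Set (W V hA)) = ⊤ := by
  rw [eq_top_iff]
  have key : ∀ n : ℕ, ∀ m : M, m ∈ V → deg m = n →
      bb V hA m ∈ Algebra.adjoin ℚ ((grW V hA deg 1 : Submodule ℚ (W V hA)) : Set (W V hA)) := by
    intro n
    induction n using Nat.strong_induction_on with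
    | _ n ih =>
      intro m hm hdm
      cases n with
      | zero =>
        rw [hB m hm hdm, bb_zero]
        exact one_mem _
      | succ k =>
        obtain ⟨a, b, rfl, hda⟩ := hC m hm (by rw [hdm]; exact Nat.succ_pos k)
        have hab := hA a b hm
        have hdb : deg b = k := by
          have h1 : deg a + deg b = k + 1 := by rw [← map_add, hdm]
          omega
        rw [← bb_mul]
        refine mul_mem (Algebra.subset_adjoin ?_) (ih k (Nat.lt_succ_self k) b hab.2 hdb)
        have := bb_mem_grW V hA deg hab.1
        rwa [hda] at this
  intro w _
  have hle : span ℚ (Set.range fun v : V => bb V hA ↑v) ≤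
      Subalgebra.toSubmodule (Algebra.adjoin ℚ
        ((grW V hA deg 1 : Submodule ℚ (W V hA)) : Set (W V hA))) := by
    rw [span_le]
    rintro - ⟨v, rfl⟩
    exact key (deg ↑v) ↑v v.2 rfl
  exact hle (bb_span V hA trivial)

include hA in
theorem isHilbert_of_orderIdeal (f : Polynomial ℚ)
    (hB : ∀ v ∈ V, deg v = 0 → v = 0)
    (hC : ∀ v ∈ V, 0 < deg v → ∃ a b : M, v = a + b ∧ deg a = 1)
    (hD : ∀ d : ℕ, {v | v ∈ V ∧ deg v = d}.Finite)
    (N : ℕ) (hcount : ∀ d : ℕ, N ≤ d → ({v | v ∈ V ∧ deg v = d}.ncard : ℚ) = f.eval (d : ℚ)) :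
    IsHilbertPolynomial f := by
  letI gm : SetLike.GradedMonoid (grW V hA deg) := gradedMonoidW V hA deg
  letI dec : DirectSum.Decomposition (grW V hA deg) := decompositionW V hA deg
  refine ⟨ℚ, W V hA, inferInstance, inferInstance, inferInstance, grW V hA deg,
    GradedRing.mk, fun i => fd_grW V hA deg i (hD i), adjoin_grW V hA deg hB hC, N, ?_⟩
  intro i hi
  rw [finrank_grW V hA deg i (hD i), hcount i hi]

end Assemble

end
end SegreConstr



section Extract

set_option maxHeartbeats 1000000

/-- degree homomorphism on `Fin n →₀ ℕ` -/
def degF (n : ℕ) : (Fin n →₀ ℕ) →+ ℕ where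
  toFun u := u.sum fun _ e => e
  map_zero' := Finsupp.sum_zero_index
  map_add' := by
    intro u v
    show (u + v).sum (fun _ e => e) = u.sum (fun _ e => e) + v.sum (fun _ e => e)
    exact Finsupp.sum_add_index' (fun _ => rfl) (fun _ _ _ => rfl)

lemma degF_single (n : ℕ) (i : Fin n) (e : ℕ) : degF n (Finsupp.single i e) = e := by
  show (Finsupp.single i e).sum (fun _ e => e) = e
  exact Finsupp.sum_single_index rfl

lemma le_degF (n : ℕ) (u : Fin n →₀ ℕ) (i : Fin n) : u i ≤ degF n u := by
  show u i ≤ ∑ j ∈ u.support, u j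
  by_cases hi : i ∈ u.support
  · exact Finset.single_le_sum (f := fun j => u j) (fun j _ => Nat.zero_le _) hi
  · rw [Finsupp.notMem_support_iff.mp hi]
    exact Nat.zero_le _

lemma degF_eq_zero {n : ℕ} {u : Fin n →₀ ℕ} (h : degF n u = 0) : u = 0 := by
  ext i
  have h1 := le_degF n u i
  simp only [Finsupp.coe_zero, Pi.zero_apply]
  omega

lemma slice_finite (n d : ℕ) : {u : Fin n →₀ ℕ | degF n u = d}.Finite := by
  classical
  set big : Fin n →₀ ℕ := Finsupp.equivFunOnFinite.symm (fun _ => d) with hbig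
  have hsub : {u : Fin n →₀ ℕ | degF n u = d} ⊆ Set.Icc 0 big := by
    intro u hu
    refine ⟨(zero_le : 0 ≤ u), ?_⟩
    rw [Finsupp.le_def]
    intro i
    have h1 := le_degF n u i
    have h2 : big i = d := rfl
    have h3 : degF n u = d := hu
    rw [h2]
    omega
  exact (Set.finite_Icc 0 big).subset hsub

lemma degF_decompose {n : ℕ} {u : Fin n →₀ ℕ} (h : 0 < degF n u) :
    ∃ a b : Fin n →₀ ℕ, u = a + b ∧ degF n a = 1 ∧ a = Finsupp.single ((u.support.min' (by
      rw [Finset.nonempty_iff_ne_empty]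
      intro hc
      rw [Finsupp.support_eq_empty.mp hc] at h
      simp [map_zero] at h)) : Fin n) 1 := by
  classical
  have hne : u.support.Nonempty := by
    rw [Finset.nonempty_iff_ne_empty]
    intro hc
    rw [Finsupp.support_eq_empty.mp hc] at h
    simp [map_zero] at h
  set i := u.support.min' hne
  have hi : i ∈ u.support := u.support.min'_mem hne
  have h1 : Finsupp.single i 1 ≤ u := by
    rw [Finsupp.single_le_iff]
    exact Nat.one_le_iff_ne_zero.mpr (Finsupp.mem_support_iff.mp hi)
  exact ⟨Finsupp.single i 1, u - Finsupp.single i 1,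
    (add_tsub_cancel_of_le h1).symm, degF_single n i 1, rfl⟩

end Extract

section MainExtract


set_option maxHeartbeats 2000000 in
theorem exists_orderIdeal (f : Polynomial ℚ) (hf : IsHilbertPolynomial f) :
    ∃ (n : ℕ) (S : Set (Fin n →₀ ℕ)) (N : ℕ),
      (∀ a b : Fin n →₀ ℕ, a + b ∈ S → a ∈ S ∧ b ∈ S) ∧
      (∀ d : ℕ, N ≤ d → ({u | u ∈ S ∧ degF n u = d}.ncard : ℚ) = f.eval (d : ℚ)) := by
  classical
  obtain ⟨k, R, _, _, _, 𝒜, _, hfd, hadj, N₀, hdim⟩ := hf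
  haveI := hfd 1
  set n := Module.finrank k (𝒜 1) with hn
  set Bx : Module.Basis (Fin n) k (𝒜 1) := Module.finBasis k (𝒜 1) with hBx
  set x : Fin n → R := fun i => ((Bx i : 𝒜 1) : R) with hx
  have hx1 : ∀ i, x i ∈ 𝒜 1 := fun i => (Bx i).2
  set π : (Fin n →₀ ℕ) → R := fun u => u.prod fun i e => x i ^ e with hπ
  have hπ0 : π 0 = 1 := Finsupp.prod_zero_index
  have hπadd : ∀ u v : Fin n →₀ ℕ, π (u + v) = π u * π v := fun u v =>
    Finsupp.prod_add_index' (fun i => pow_zero (x i)) (fun i a b => pow_add (x i) a b)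
  have hπsingle : ∀ (i : Fin n) (e : ℕ), π (Finsupp.single i e) = x i ^ e := fun i e =>
    Finsupp.prod_single_index (pow_zero (x i))
  have hπmem : ∀ u : Fin n →₀ ℕ, π u ∈ 𝒜 (degF n u) := by
    intro u
    induction u using Finsupp.induction with
    | zero => rw [hπ0, map_zero]; exact SetLike.one_mem_graded 𝒜
    | single_add i e u hiu he ih =>
      rw [hπadd, map_add, degF_single, hπsingle]
      have h1 : x i ^ e ∈ 𝒜 e := by
        have := SetLike.pow_mem_graded e (hx1 i)
        rwa [smul_eq_mul, mul_one] at this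
      exact SetLike.mul_mem_graded h1 ih
  -- spanning of everything by monomials
  have hspan1 : span k (Set.range x) = (𝒜 1 : Submodule k R) := by
    have h1 := Bx.span_eq
    have h2 := congrArg (Submodule.map (𝒜 1).subtype) h1
    rw [Submodule.map_span, Submodule.map_subtype_top, ← Set.range_comp] at h2
    exact h2
  have hadj2 : Algebra.adjoin k (Set.range x) = ⊤ := by
    rw [← hspan1] at hadj
    rwa [Algebra.adjoin_span] at hadj
  have hcl : (Submonoid.closure (Set.range x) : Set R) ⊆ Set.range π := by
    intro r hr
    induction hr using Submonoid.closure_induction with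
    | mem r hr =>
      obtain ⟨i, rfl⟩ := hr
      exact ⟨Finsupp.single i 1, by rw [hπsingle, pow_one]⟩
    | one => exact ⟨0, hπ0⟩
    | mul a b ha' hb' ha hb =>
      obtain ⟨u, rfl⟩ := ha
      obtain ⟨v, rfl⟩ := hb
      exact ⟨u + v, hπadd u v⟩
  have spanTop : ∀ r : R, r ∈ span k (Set.range π) := by
    intro r
    have h1 : (⊤ : Submodule k R) ≤ span k (Set.range π) := by
      rw [← Algebra.top_toSubmodule, ← hadj2, Algebra.adjoin_eq_span]
      exact span_le.mpr (hcl.trans subset_span)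
    exact h1 trivial
  -- projections
  set pd : ℕ → R →ₗ[k] R := fun d => (𝒜 d).subtype ∘ₗ
    (DirectSum.component k ℕ (fun i => (𝒜 i : Submodule k R)) d) ∘ₗ
    (DirectSum.decomposeLinearEquiv 𝒜).toLinearMap with hpd
  have hpd_same : ∀ d (a : R), a ∈ 𝒜 d → pd d a = a := by
    intro d a ha
    exact DirectSum.decompose_of_mem_same 𝒜 ha
  have hpd_ne : ∀ d e (a : R), a ∈ 𝒜 e → e ≠ d → pd d a = 0 := by
    intro d e a ha hne
    have := DirectSum.decompose_of_mem_ne 𝒜 ha hne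
    simp [hpd]; exact Subtype.ext this
  have sliceSpan : ∀ d : ℕ, (𝒜 d : Submodule k R) = span k (π '' {u | degF n u = d}) := by
    intro d
    refine le_antisymm ?_ ?_
    · intro a ha
      have h1 : pd d a ∈ Submodule.map (pd d) (span k (Set.range π)) :=
        ⟨a, spanTop a, rfl⟩
      rw [Submodule.map_span] at h1
      have h2 : (pd d) '' Set.range π ⊆ insert 0 (π '' {u | degF n u = d}) := by
        rintro - ⟨-, ⟨u, rfl⟩, rfl⟩
        by_cases hu : degF n u = d
        · right
          refine ⟨u, hu, ?_⟩
          rw [hpd_same d (π u) (hu ▸ hπmem u)]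
        · left
          rw [hpd_ne d (degF n u) (π u) (hπmem u) hu]
      have h3 : pd d a ∈ span k (insert 0 (π '' {u | degF n u = d})) :=
        span_le.mpr (h2.trans subset_span) h1
      rw [Submodule.span_insert_zero] at h3
      rwa [hpd_same d a ha] at h3
    · rw [span_le]
      rintro - ⟨u, hu, rfl⟩
      exact hu ▸ hπmem u
  -- the set of standard monomials
  set S : Set (Fin n →₀ ℕ) :=
    {u | π u ∉ span k (π '' {w | degF n w = degF n u ∧ toLex w < toLex u})} with hS
  refine ⟨n, S, N₀, ?_, ?_⟩
  · -- closure under division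
    have key : ∀ a b : Fin n →₀ ℕ, a ∉ S → a + b ∉ S := by
      intro a b ha
      simp only [hS, Set.mem_setOf_eq, not_not] at ha ⊢
      have h2 : π (a + b) ∈ Submodule.map (LinearMap.mulLeft k (π b))
          (span k (π '' {w | degF n w = degF n a ∧ toLex w < toLex a})) := by
        refine ⟨π a, ha, ?_⟩
        rw [LinearMap.mulLeft_apply, ← hπadd, add_comm]
      rw [Submodule.map_span] at h2
      refine span_le.mpr ?_ h2
      rintro - ⟨-, ⟨w, ⟨hdw, hlw⟩, rfl⟩, rfl⟩
      rw [LinearMap.mulLeft_apply, ← hπadd]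
      refine subset_span ⟨b + w, ⟨?_, ?_⟩, rfl⟩
      · rw [map_add, map_add, hdw, add_comm]
      · show toLex (b + w) < toLex (a + b)
        have e1 : toLex (b + w) = toLex b + toLex w := rfl
        have e2 : toLex (a + b) = toLex b + toLex a :=
          (congrArg toLex (add_comm a b)).trans (rfl : toLex (b + a) = toLex b + toLex a)
        rw [e1, e2]
        exact add_lt_add_right hlw (toLex b)
    intro a b hab
    constructor
    · by_contra ha
      exact key a b ha hab
    · by_contra hb
      rw [add_comm] at hab
      exact key b a hb hab
  · -- counting
    intro d hd
    have hslice : {w : Lex (Fin n →₀ ℕ) | degF n (ofLex w) = d}.Finite := by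
      have h1 : {w : Lex (Fin n →₀ ℕ) | degF n (ofLex w) = d}
          = ⇑toLex '' {u : Fin n →₀ ℕ | degF n u = d} := by
        ext w
        exact ⟨fun hw => ⟨ofLex w, hw, rfl⟩, by rintro ⟨u, hu, rfl⟩; exact hu⟩
      rw [h1]
      exact (slice_finite n d).image _
    have hgr := greedy_finrank (K := k)
      {w : Lex (Fin n →₀ ℕ) | degF n (ofLex w) = d} hslice (fun w => π (ofLex w))
    -- identify the span
    have himg : (fun w : Lex (Fin n →₀ ℕ) => π (ofLex w)) ''
        {w | degF n (ofLex w) = d} = π '' {u | degF n u = d} := by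
      ext r
      constructor
      · rintro ⟨w, hw, rfl⟩; exact ⟨ofLex w, hw, rfl⟩
      · rintro ⟨u, hu, rfl⟩; exact ⟨toLex u, hu, rfl⟩
    rw [himg] at hgr
    -- identify the greedy set
    have hset : {i : Lex (Fin n →₀ ℕ) | i ∈ {w | degF n (ofLex w) = d} ∧
        (fun w => π (ofLex w)) i ∉ span k ((fun w => π (ofLex w)) ''
          {j | j ∈ {w | degF n (ofLex w) = d} ∧ j < i})}
        = ⇑toLex '' {u | u ∈ S ∧ degF n u = d} := by
      ext i
      constructor
      · rintro ⟨hid, hnot⟩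
        refine ⟨ofLex i, ⟨?_, hid⟩, rfl⟩
        rw [hS, Set.mem_setOf_eq]
        intro hmem
        refine hnot ?_
        have himg2 : π '' {w | degF n w = degF n (ofLex i) ∧ toLex w < toLex (ofLex i)}
            = (fun w : Lex (Fin n →₀ ℕ) => π (ofLex w)) ''
              {j | j ∈ {w | degF n (ofLex w) = d} ∧ j < i} := by
          ext r
          constructor
          · rintro ⟨w, ⟨hdw, hlw⟩, rfl⟩
            exact ⟨toLex w, ⟨by rwa [hid] at hdw, hlw⟩, rfl⟩
          · rintro ⟨j, ⟨hjd, hji⟩, rfl⟩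
            exact ⟨ofLex j, ⟨by rw [hjd, hid], hji⟩, rfl⟩
        -- bridge

        rwa [himg2] at hmem
      · rintro ⟨u, ⟨huS, hud⟩, rfl⟩
        refine ⟨hud, ?_⟩
        rw [hS, Set.mem_setOf_eq] at huS
        intro hmem
        refine huS ?_
        have himg2 : (fun w : Lex (Fin n →₀ ℕ) => π (ofLex w)) ''
            {j | j ∈ {w | degF n (ofLex w) = d} ∧ j < toLex u}
            = π '' {w | degF n w = degF n u ∧ toLex w < toLex u} := by
          ext r
          constructor
          · rintro ⟨j, ⟨hjd, hji⟩, rfl⟩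
            exact ⟨ofLex j, ⟨by rw [hjd, hud], hji⟩, rfl⟩
          · rintro ⟨w, ⟨hdw, hlw⟩, rfl⟩
            exact ⟨toLex w, ⟨by rwa [hud] at hdw, hlw⟩, rfl⟩
        rwa [himg2] at hmem
    rw [hset] at hgr
    rw [Set.ncard_image_of_injective _ toLex.injective] at hgr
    have hfin : Module.finrank k (span k (π '' {u | degF n u = d}))
        = Module.finrank k (𝒜 d) := by
      rw [← sliceSpan d]
    rw [hfin] at hgr
    rw [← hgr]
    exact hdim d hd

end MainExtract


set_option maxHeartbeats 1000000 in
theorem sign_patterns_stmt13 (f g : Polynomial ℚ)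
    (hf : IsHilbertPolynomial f) (hg : IsHilbertPolynomial g) :
    IsHilbertPolynomial (f * g) := by
  classical
  obtain ⟨n₁, S, N₁, hS, hScount⟩ := exists_orderIdeal f hf
  obtain ⟨n₂, T, N₂, hT, hTcount⟩ := exists_orderIdeal g hg
  -- the Segre submonoid of pairs with equal degrees
  set MM : AddSubmonoid ((Fin n₁ →₀ ℕ) × (Fin n₂ →₀ ℕ)) :=
    { carrier := {p | degF n₁ p.1 = degF n₂ p.2}
      add_mem' := by
        intro p q hp hq
        simp only [Set.mem_setOf_eq] at hp hq ⊢
        show degF n₁ (p.1 + q.1) = degF n₂ (p.2 + q.2)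
        rw [map_add, map_add, hp, hq]
      zero_mem' := by
        simp only [Set.mem_setOf_eq]
        show degF n₁ 0 = degF n₂ 0
        rw [map_zero, map_zero] } with hMM
  set deg : ↥MM →+ ℕ :=
    { toFun := fun p => degF n₁ (p : (Fin n₁ →₀ ℕ) × (Fin n₂ →₀ ℕ)).1
      map_zero' := by
        show degF n₁ (0 : (Fin n₁ →₀ ℕ) × (Fin n₂ →₀ ℕ)).1 = 0
        rw [Prod.fst_zero, map_zero]
      map_add' := by
        intro p q
        show degF n₁ (p.val.1 + q.val.1) = degF n₁ p.val.1 + degF n₁ q.val.1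
        rw [map_add] } with hdeg
  have hdeg2 : ∀ v : ↥MM, degF n₂ v.val.2 = deg v := fun v => (v.2).symm
  set V : Set ↥MM := {p | p.val.1 ∈ S ∧ p.val.2 ∈ T} with hV
  have hA : ∀ a b : ↥MM, a + b ∈ V → a ∈ V ∧ b ∈ V := by
    intro a b hab
    obtain ⟨h1, h2⟩ := hab
    have h1' := hS a.val.1 b.val.1 h1
    have h2' := hT a.val.2 b.val.2 h2
    exact ⟨⟨h1'.1, h2'.1⟩, ⟨h1'.2, h2'.2⟩⟩
  have hB : ∀ v ∈ V, deg v = 0 → v = 0 := by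
    intro v _ h0
    have e1 : v.val.1 = 0 := degF_eq_zero h0
    have e2 : v.val.2 = 0 := degF_eq_zero (by rw [hdeg2 v]; exact h0)
    apply Subtype.ext
    exact Prod.ext e1 e2
  have hC : ∀ v ∈ V, 0 < deg v → ∃ a b : ↥MM, v = a + b ∧ deg a = 1 := by
    intro v _ h0
    obtain ⟨a₁, b₁, he₁, hd₁, -⟩ := degF_decompose (n := n₁) (u := v.val.1) h0
    obtain ⟨a₂, b₂, he₂, hd₂, -⟩ := degF_decompose (n := n₂) (u := v.val.2)
      (by rw [hdeg2 v]; exact h0)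
    have hsum : degF n₁ a₁ + degF n₁ b₁ = degF n₂ a₂ + degF n₂ b₂ := by
      rw [← map_add, ← map_add, ← he₁, ← he₂]
      exact v.2
    have hbb : degF n₁ b₁ = degF n₂ b₂ := by omega
    refine ⟨⟨(a₁, a₂), by show degF n₁ a₁ = degF n₂ a₂; rw [hd₁, hd₂]⟩,
      ⟨(b₁, b₂), hbb⟩, ?_, ?_⟩
    · apply Subtype.ext
      exact Prod.ext he₁ he₂
    · exact hd₁
  have hD : ∀ d : ℕ, {v : ↥MM | v ∈ V ∧ deg v = d}.Finite := by
    intro d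
    refine Set.Finite.of_finite_image ?_ (Subtype.val_injective.injOn)
    refine Set.Finite.subset (Set.Finite.prod
      ((slice_finite n₁ d).subset (fun u (hu : u ∈ S ∧ degF n₁ u = d) => hu.2))
      ((slice_finite n₂ d).subset (fun u (hu : u ∈ T ∧ degF n₂ u = d) => hu.2))) ?_
    rintro - ⟨v, ⟨hvV, hvd⟩, rfl⟩
    refine ⟨⟨hvV.1, hvd⟩, ⟨hvV.2, by rw [hdeg2 v]; exact hvd⟩⟩
  have hEquiv : ∀ d : ℕ, {v : ↥MM | v ∈ V ∧ deg v = d}.ncard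
      = {u | u ∈ S ∧ degF n₁ u = d}.ncard * {u | u ∈ T ∧ degF n₂ u = d}.ncard := by
    intro d
    have E : {v : ↥MM | v ∈ V ∧ deg v = d} ≃
        ({u | u ∈ S ∧ degF n₁ u = d} × {u | u ∈ T ∧ degF n₂ u = d}) :=
      { toFun := fun v => (⟨v.1.val.1, v.2.1.1, v.2.2⟩,
          ⟨v.1.val.2, v.2.1.2, by rw [hdeg2 v.1]; exact v.2.2⟩)
        invFun := fun p => ⟨⟨(p.1.1, p.2.1), by
            show degF n₁ p.1.val = degF n₂ p.2.val
            rw [p.1.2.2, p.2.2.2]⟩, ⟨p.1.2.1, p.2.2.1⟩, p.1.2.2⟩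
        left_inv := fun v => rfl
        right_inv := fun p => rfl }
    rw [← Nat.card_coe_set_eq, ← Nat.card_coe_set_eq, ← Nat.card_coe_set_eq,
      Nat.card_congr E, Nat.card_prod]
  refine SegreConstr.isHilbert_of_orderIdeal V hA deg (f * g) hB hC hD (max N₁ N₂) ?_
  intro d hd
  rw [hEquiv d]
  push_cast
  rw [hScount d (le_of_max_le_left hd), hTcount d (le_of_max_le_right hd), eval_mul]
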